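/- Let p be a prime and r ≤ s non-negative integers. The total number N of additive subgroups of ℤ_{p^r} × ℤ_{p^s} satisfies N·(p − 1)² = p^{r+1}·[(s − r + 1)(p − 1) + 2] − [(s + r + 3)(p − 1) + 2] (an identity of integers). -/

import Mathlib

open AddSubgroup QuotientAddGroup Finset

section Goursat

variable {A B : Type*} [AddCommGroup A] [AddCommGroup B]

/-- The subgroup of `A × B` attached to `(I, K, f)`. -/
private def goursatMk (I : AddSubgroup A) (K : AddSubgroup B) (f : I →+ B ⧸ K) :
    AddSubgroup (A × B) where
  carrier := {x | ∃ h : x.1 ∈ I, (x.2 : B ⧸ K) = f ⟨x.1, h⟩}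
  zero_mem' := ⟨zero_mem I, by
    have h0 : (⟨(0 : A × B).1, zero_mem I⟩ : I) = 0 := rfl
    rw [h0, map_zero]; rfl⟩
  add_mem' := by
    rintro ⟨a, b⟩ ⟨c, d⟩ ⟨ha, hb⟩ ⟨hc, hd⟩
    refine ⟨add_mem ha hc, ?_⟩
    show ((b + d : B) : B ⧸ K) = f ⟨a + c, add_mem ha hc⟩
    have : (⟨a + c, add_mem ha hc⟩ : I) = ⟨a, ha⟩ + ⟨c, hc⟩ := rfl
    rw [this, map_add, ← hb, ← hd]; rfl
  neg_mem' := by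
    rintro ⟨a, b⟩ ⟨ha, hb⟩
    refine ⟨neg_mem ha, ?_⟩
    show ((-b : B) : B ⧸ K) = f ⟨-a, neg_mem ha⟩
    have : (⟨-a, neg_mem ha⟩ : I) = -⟨a, ha⟩ := rfl
    rw [this, map_neg, ← hb]; rfl

/-- Packaging map of Goursat-type data to subgroups of the product. -/
private def goursatFun :
    (Σ (I : AddSubgroup A) (K : AddSubgroup B), (I →+ B ⧸ K)) → AddSubgroup (A × B) :=
  fun x => goursatMk x.1 x.2.1 x.2.2

private lemma goursatFun_injective :
    Function.Injective (goursatFun (A := A) (B := B)) := by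
  rintro ⟨I, K, f⟩ ⟨I', K', f'⟩ h
  simp only [goursatFun] at h
  have hmem : ∀ (I : AddSubgroup A) (K : AddSubgroup B) (f : I →+ B ⧸ K) (a : A),
      a ∈ I ↔ ∃ b, (a, b) ∈ goursatMk I K f := by
    intro I K f a
    constructor
    · intro ha
      obtain ⟨b, hb⟩ := QuotientAddGroup.mk_surjective (f ⟨a, ha⟩)
      exact ⟨b, ha, hb⟩
    · rintro ⟨b, hb, -⟩
      exact hb
  have hI : I = I' := by
    ext a
    rw [hmem I K f a, hmem I' K' f' a, h]
  subst hI
  have hmemK : ∀ (K : AddSubgroup B) (f : I →+ B ⧸ K) (b : B),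
      b ∈ K ↔ (0, b) ∈ goursatMk I K f := by
    intro K f b
    have h0 : (⟨(0 : A), zero_mem I⟩ : I) = 0 := rfl
    constructor
    · intro hb
      refine ⟨zero_mem I, ?_⟩
      show ((b : B) : B ⧸ K) = f ⟨0, zero_mem I⟩
      rw [h0, map_zero, QuotientAddGroup.eq_zero_iff]; exact hb
    · rintro ⟨h1, h2⟩
      have h2' : ((b : B) : B ⧸ K) = f ⟨0, zero_mem I⟩ := h2
      rw [h0, map_zero] at h2'
      exact (QuotientAddGroup.eq_zero_iff b).mp h2'
  have hK : K = K' := by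
    ext b
    rw [hmemK K f b, hmemK K' f' b, h]
  subst hK
  have hf : f = f' := by
    ext ⟨a, ha⟩
    obtain ⟨b, hb⟩ := QuotientAddGroup.mk_surjective (f ⟨a, ha⟩)
    have h1 : (a, b) ∈ goursatMk I K f := ⟨ha, hb⟩
    rw [h] at h1
    obtain ⟨ha', hb'⟩ := h1
    rw [← hb]
    exact hb'
  rw [hf]

private lemma goursatFun_surjective :
    Function.Surjective (goursatFun (A := A) (B := B)) := by
  intro H
  set I : AddSubgroup A := H.map (AddMonoidHom.fst A B) with hIdef
  set K : AddSubgroup B := H.comap (AddMonoidHom.inr A B) with hKdef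
  have ρmem : ∀ x : H, (x : A × B).1 ∈ I := fun x => ⟨(x : A × B), x.2, rfl⟩
  let ρ : H →+ I :=
    { toFun := fun x => ⟨(x : A × B).1, ρmem x⟩
      map_zero' := rfl
      map_add' := fun _ _ => rfl }
  have hρ : Function.Surjective ρ := by
    rintro ⟨a, x, hx, rfl⟩
    exact ⟨⟨x, hx⟩, rfl⟩
  let π : H →+ B ⧸ K := (QuotientAddGroup.mk' K).comp ((AddMonoidHom.snd A B).comp H.subtype)
  have hkerρ : ∀ x ∈ ρ.ker, π x = 0 := by
    rintro ⟨⟨a, b⟩, hab⟩ hx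
    have ha : a = 0 := congrArg Subtype.val (AddMonoidHom.mem_ker.mp hx)
    subst ha
    have : b ∈ K := hab
    exact (QuotientAddGroup.eq_zero_iff b).mpr this
  let e : (H ⧸ ρ.ker) ≃+ I := QuotientAddGroup.quotientKerEquivOfSurjective ρ hρ
  let l : (H ⧸ ρ.ker) →+ B ⧸ K := QuotientAddGroup.lift ρ.ker π hkerρ
  let f : I →+ B ⧸ K := l.comp e.symm.toAddMonoidHom
  have key : ∀ x : H, f (ρ x) = π x := by
    intro x
    have h1 : e.symm (ρ x) = QuotientAddGroup.mk x := by
      apply e.injective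
      simp only [AddEquiv.apply_symm_apply]
      rfl
    show l (e.symm (ρ x)) = π x
    rw [h1]
    rfl
  refine ⟨⟨I, K, f⟩, ?_⟩
  show goursatMk I K f = H
  ext ⟨a, b⟩
  constructor
  · rintro ⟨ha, hb⟩
    obtain ⟨x, hx, hxa⟩ := id ha
    have : (⟨a, ha⟩ : I) = ρ ⟨x, hx⟩ := by
      apply Subtype.ext
      exact hxa.symm
    rw [this, key] at hb
    have hb' : ((b : B) : B ⧸ K) = ((x.2 : B) : B ⧸ K) := hb
    rw [QuotientAddGroup.eq] at hb'
    have hK2 : ((0 : A), -b + x.2) ∈ H := hb'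
    have hxa' : x.1 = a := hxa
    have heq : (a, b) = (x.1, x.2) - ((0 : A), -b + x.2) := by
      refine Prod.ext ?_ ?_ <;> simp [hxa'] <;> abel
    rw [heq]
    exact sub_mem hx hK2
  · intro hab
    refine ⟨⟨(a, b), hab, rfl⟩, ?_⟩
    have : (⟨a, ⟨(a, b), hab, rfl⟩⟩ : I) = ρ ⟨(a, b), hab⟩ := rfl
    rw [this, key]
    rfl

private lemma card_addSubgroup_prod_eq :
    Nat.card (AddSubgroup (A × B)) =
      Nat.card (Σ (I : AddSubgroup A) (K : AddSubgroup B), (I →+ B ⧸ K)) :=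
  (Nat.card_eq_of_bijective _ ⟨goursatFun_injective, goursatFun_surjective⟩).symm

end Goursat

private lemma nat_card_sigma {ι : Type*} [Fintype ι] (f : ι → Type*) [∀ i, Finite (f i)] :
    Nat.card (Σ i, f i) = ∑ i, Nat.card (f i) := by
  letI : ∀ i, Fintype (f i) := fun i => Fintype.ofFinite _
  simp [Nat.card_eq_fintype_card, Fintype.card_sigma]

/-- Counting homs between `ZMod`s. -/
private lemma card_hom_zmod (a b : ℕ) (ha : a ≠ 0) (hb : b ≠ 0) :
    Nat.card (ZMod a →+ ZMod b) = Nat.gcd b a := by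
  haveI : NeZero a := ⟨ha⟩
  haveI : NeZero b := ⟨hb⟩
  set c : ZMod b := (a : ZMod b) with hc
  set μ : ZMod b →+ ZMod b := AddMonoidHom.mulLeft c with hμ
  have hext : ∀ g h : ZMod a →+ ZMod b, g 1 = h 1 → g = h := by
    intro g h hgh
    ext x
    have hx : ((x.val : ℕ) : ZMod a) = x := by rw [ZMod.natCast_val, ZMod.cast_id]
    have hx2 : (x : ZMod a) = x.val • (1 : ZMod a) := by
      rw [nsmul_eq_mul, mul_one, hx]
    rw [hx2, map_nsmul, map_nsmul, hgh]
  have hval : ∀ f : ZMod a →+ ZMod b, c * f 1 = 0 := by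
    intro f
    rw [hc, ← nsmul_eq_mul, ← map_nsmul]
    have : a • (1 : ZMod a) = 0 := by
      rw [nsmul_eq_mul, mul_one, ZMod.natCast_self]
    rw [this, map_zero]
  have e : (ZMod a →+ ZMod b) ≃ μ.ker := by
    apply Equiv.ofBijective (fun f => (⟨f 1, hval f⟩ : μ.ker))
    constructor
    · intro f g hfg
      exact hext f g (congrArg Subtype.val hfg)
    · rintro ⟨y, hy⟩
      have hy' : (a : ℤ) • y = 0 := by
        have h2 : c * y = 0 := hy
        rw [natCast_zsmul, nsmul_eq_mul]
        exact h2
      refine ⟨ZMod.lift a ⟨zmultiplesHom (ZMod b) y, by simpa using hy'⟩, ?_⟩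
      apply Subtype.ext
      show ZMod.lift a _ 1 = y
      have h := ZMod.lift_coe a ⟨zmultiplesHom (ZMod b) y, by simpa using hy'⟩ (1 : ℤ)
      simpa using h
  rw [Nat.card_congr e]
  have hrange : μ.range = zmultiples c := by
    ext x
    constructor
    · rintro ⟨y, rfl⟩
      refine ⟨(y.val : ℤ), ?_⟩
      show ((y.val : ℤ)) • c = μ y
      have hμy : μ y = c * y := rfl
      rw [hμy, zsmul_eq_mul, Int.cast_natCast, ZMod.natCast_val, ZMod.cast_id, mul_comm]
    · rintro ⟨k, rfl⟩
      refine ⟨(k : ZMod b), ?_⟩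
      show c * (k : ℤ) = (k : ℤ) • c
      rw [zsmul_eq_mul, mul_comm]
  have hcardrange : Nat.card μ.range = b / Nat.gcd b a := by
    rw [hrange, Nat.card_zmultiples, hc, ZMod.addOrderOf_coe a hb]
  have h1 : Nat.card (ZMod b) = Nat.card (ZMod b ⧸ μ.ker) * Nat.card μ.ker :=
    AddSubgroup.card_eq_card_quotient_mul_card_addSubgroup μ.ker
  have h2 : Nat.card (ZMod b ⧸ μ.ker) = Nat.card μ.range :=
    Nat.card_congr (QuotientAddGroup.quotientKerEquivRange μ).toEquiv
  rw [Nat.card_zmod, h2, hcardrange] at h1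
  have hg : Nat.gcd b a ∣ b := Nat.gcd_dvd_left b a
  have hg0 : Nat.gcd b a ≠ 0 := Nat.gcd_ne_zero_left hb
  have hbg : 0 < b / Nat.gcd b a :=
    Nat.div_pos (Nat.le_of_dvd (Nat.pos_of_ne_zero hb) hg) (Nat.pos_of_ne_zero hg0)
  have : b / Nat.gcd b a * Nat.card μ.ker = b / Nat.gcd b a * Nat.gcd b a := by
    rw [← h1, Nat.div_mul_cancel hg]
  exact Nat.eq_of_mul_eq_mul_left hbg this

/-- Counting homs between finite cyclic groups. -/
private lemma card_hom_cyclic (M N : Type*) [AddCommGroup M] [AddCommGroup N]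
    [Finite M] [Finite N] [hM : IsAddCyclic M] [hN : IsAddCyclic N] :
    Nat.card (M →+ N) = Nat.gcd (Nat.card N) (Nat.card M) := by
  have hM0 : Nat.card M ≠ 0 := Nat.card_pos.ne'
  have hN0 : Nat.card N ≠ 0 := Nat.card_pos.ne'
  rw [← card_hom_zmod _ _ hM0 hN0]
  exact Nat.card_congr ((AddEquiv.addMonoidHomCongrLeftEquiv (zmodAddCyclicAddEquiv hM)).trans
    (AddEquiv.addMonoidHomCongrRightEquiv (zmodAddCyclicAddEquiv hN))).symm

private lemma zmultiples_natCast_eq_gcd (n m : ℕ) :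
    zmultiples ((m : ZMod n)) = zmultiples ((Nat.gcd n m : ZMod n)) := by
  apply le_antisymm
  · apply zmultiples_le_of_mem
    refine ⟨((m / Nat.gcd n m : ℕ) : ℤ), ?_⟩
    show ((m / Nat.gcd n m : ℕ) : ℤ) • ((Nat.gcd n m : ℕ) : ZMod n) = ((m : ℕ) : ZMod n)
    rw [zsmul_eq_mul, Int.cast_natCast, ← Nat.cast_mul,
      Nat.div_mul_cancel (Nat.gcd_dvd_right n m)]
  · apply zmultiples_le_of_mem
    refine ⟨Nat.gcdB n m, ?_⟩
    show Nat.gcdB n m • ((m : ℕ) : ZMod n) = ((Nat.gcd n m : ℕ) : ZMod n)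
    rw [zsmul_eq_mul, mul_comm]
    have h := Nat.gcd_eq_gcd_ab n m
    have : ((Nat.gcd n m : ℤ) : ZMod n) =
        (((n : ℤ) * Nat.gcdA n m + (m : ℤ) * Nat.gcdB n m : ℤ) : ZMod n) := by
      exact_mod_cast congrArg (fun z : ℤ => ((z : ZMod n))) h
    push_cast at this ⊢
    rw [this]
    simp [ZMod.natCast_self]

private lemma addSubgroup_eq_zmultiples_gen {n : ℕ} (hn : n ≠ 0) (H : AddSubgroup (ZMod n)) :
    ∃ m : ℕ, m ∣ n ∧ H = zmultiples ((m : ZMod n)) := by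
  haveI : NeZero n := ⟨hn⟩
  obtain ⟨g, hg⟩ := IsAddCyclic.exists_generator (α := H)
  have hH : H = zmultiples ((g : ZMod n)) := by
    apply le_antisymm
    · intro x hx
      obtain ⟨k, hk⟩ := hg ⟨x, hx⟩
      have := congrArg Subtype.val hk
      push_cast at this
      exact ⟨k, this⟩
    · exact zmultiples_le_of_mem g.2
  set m : ℕ := (g : ZMod n).val with hm
  have hgm : ((m : ℕ) : ZMod n) = (g : ZMod n) := by
    rw [hm, ZMod.natCast_val, ZMod.cast_id]
  refine ⟨Nat.gcd n m, Nat.gcd_dvd_left n m, ?_⟩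
  rw [hH, ← hgm, zmultiples_natCast_eq_gcd]

/-- The subgroups of `ZMod (p ^ r)`, indexed by `Fin (r + 1)`. -/
private noncomputable def subFun (p r : ℕ) : Fin (r + 1) → AddSubgroup (ZMod (p ^ r)) :=
  fun i => zmultiples (((p ^ (r - i.1) : ℕ) : ZMod (p ^ r)))

private lemma card_subFun {p : ℕ} (hp : p.Prime) (r : ℕ) (i : Fin (r + 1)) :
    Nat.card (subFun p r i) = p ^ i.1 := by
  have hi : i.1 ≤ r := Nat.lt_succ_iff.mp i.2
  have hpr : (p : ℕ) ^ r ≠ 0 := pow_ne_zero _ hp.pos.ne'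
  rw [subFun, Nat.card_zmultiples, ZMod.addOrderOf_coe _ hpr,
    Nat.gcd_eq_right (pow_dvd_pow p (Nat.sub_le r i.1)),
    Nat.pow_div (Nat.sub_le r i.1) hp.pos, Nat.sub_sub_self hi]

private lemma subFun_bijective {p : ℕ} (hp : p.Prime) (r : ℕ) :
    Function.Bijective (subFun p r) := by
  constructor
  · intro i j hij
    have : p ^ i.1 = p ^ j.1 := by
      rw [← card_subFun hp r i, ← card_subFun hp r j, hij]
    exact Fin.ext (Nat.pow_right_injective hp.two_le this)
  · intro H
    have hpr : (p : ℕ) ^ r ≠ 0 := pow_ne_zero _ hp.pos.ne'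
    obtain ⟨m, hmdvd, hm⟩ := addSubgroup_eq_zmultiples_gen hpr H
    obtain ⟨k, hk, rfl⟩ := (Nat.dvd_prime_pow hp).mp hmdvd
    refine ⟨⟨r - k, by omega⟩, ?_⟩
    have h2 : r - (r - k) = k := Nat.sub_sub_self hk
    show zmultiples (((p ^ (r - (r - k)) : ℕ) : ZMod (p ^ r))) = H
    rw [h2, hm]

/-- `gcd` of two powers of the same number. -/
private lemma gcd_pow_pow (p a b : ℕ) : Nat.gcd (p ^ a) (p ^ b) = p ^ (min a b) := by
  rcases le_total a b with h | h
  · rw [Nat.gcd_eq_left (pow_dvd_pow p h), min_eq_left h]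
  · rw [Nat.gcd_eq_right (pow_dvd_pow p h), min_eq_right h]

/-- The key arithmetic identity. -/
private lemma key_arith (p : ℤ) (r s : ℕ) (hrs : r ≤ s) :
    (∑ i ∈ Finset.range (r + 1), ∑ j ∈ Finset.range (s + 1), p ^ (min i j)) * (p - 1) ^ 2 =
      p ^ (r + 1) * (((s : ℤ) - (r : ℤ) + 1) * (p - 1) + 2) -
        (((s : ℤ) + (r : ℤ) + 3) * (p - 1) + 2) := by
  induction r with
  | zero =>
    have : ∀ j ∈ Finset.range (s + 1), p ^ (min 0 j) = 1 := by
      intro j _; simp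
    rw [Finset.sum_range_one, Finset.sum_congr rfl this, Finset.sum_const, Finset.card_range]
    push_cast
    ring
  | succ r ih =>
    have hrs' : r ≤ s := le_trans (Nat.le_succ r) hrs
    have ih2 := ih hrs'
    rw [Finset.sum_range_succ]
    -- compute the last inner sum
    have hsplit : ∑ j ∈ Finset.range (s + 1), p ^ (min (r + 1) j) =
        (∑ j ∈ Finset.range (r + 1), p ^ j) + ((s : ℤ) - (r : ℤ)) * p ^ (r + 1) := by
      rw [Finset.range_eq_Ico, ← Finset.sum_Ico_consecutive _ (Nat.zero_le (r + 1)) (by omega)]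
      congr 1
      · rw [← Finset.range_eq_Ico]
        apply Finset.sum_congr rfl
        intro j hj
        rw [Finset.mem_range] at hj
        rw [min_eq_right (by omega)]
      · have hconst : ∀ j ∈ Finset.Ico (r + 1) (s + 1), p ^ (min (r + 1) j) = p ^ (r + 1) := by
          intro j hj
          rw [Finset.mem_Ico] at hj
          rw [min_eq_left (by omega)]
        rw [Finset.sum_congr rfl hconst, Finset.sum_const, Nat.card_Ico, nsmul_eq_mul]
        have : ((s + 1 - (r + 1) : ℕ) : ℤ) = (s : ℤ) - (r : ℤ) := by omega
        rw [this]
    rw [hsplit]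
    have hG : (∑ j ∈ Finset.range (r + 1), p ^ j) * (p - 1) = p ^ (r + 1) - 1 :=
      geom_sum_mul p (r + 1)
    push_cast
    linear_combination ih2 + (p - 1) * hG


/-- Counting subgroups of `ℤ_{p^r} × ℤ_{p^s}` (`r ≤ s`): the number `N` of additive
subgroups satisfies
`N(p-1)² = p^{r+1}[(s-r+1)(p-1)+2] - [(s+r+3)(p-1)+2]` as integers. -/
theorem card_addSubgroups_zmod_prime_pow_prod (p : ℕ) (hp : p.Prime) (r s : ℕ)
    (hrs : r ≤ s) :
    (Nat.card (AddSubgroup (ZMod (p ^ r) × ZMod (p ^ s))) : ℤ) * ((p : ℤ) - 1) ^ 2 =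
      (p : ℤ) ^ (r + 1) * (((s : ℤ) - (r : ℤ) + 1) * ((p : ℤ) - 1) + 2) -
        (((s : ℤ) + (r : ℤ) + 3) * ((p : ℤ) - 1) + 2) := by
  haveI : NeZero (p ^ r) := ⟨pow_ne_zero r hp.pos.ne'⟩
  haveI : NeZero (p ^ s) := ⟨pow_ne_zero s hp.pos.ne'⟩
  classical
  haveI : ∀ (I : AddSubgroup (ZMod (p ^ r))) (K : AddSubgroup (ZMod (p ^ s))),
      Finite (↥I →+ ZMod (p ^ s) ⧸ K) := fun I K =>
    Finite.of_injective (fun f => (f : ↥I → ZMod (p ^ s) ⧸ K)) DFunLike.coe_injective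
  letI : Fintype (AddSubgroup (ZMod (p ^ r))) := Fintype.ofFinite _
  letI : Fintype (AddSubgroup (ZMod (p ^ s))) := Fintype.ofFinite _
  -- Step 1: Goursat decomposition of the count
  have hcard : Nat.card (AddSubgroup (ZMod (p ^ r) × ZMod (p ^ s))) =
      ∑ I : AddSubgroup (ZMod (p ^ r)), ∑ K : AddSubgroup (ZMod (p ^ s)),
        Nat.card (↥I →+ ZMod (p ^ s) ⧸ K) := by
    rw [card_addSubgroup_prod_eq, nat_card_sigma]
    exact Finset.sum_congr rfl fun I _ => nat_card_sigma _
  -- Step 2: evaluate each term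
  have hterm : ∀ (i : Fin (r + 1)) (j : Fin (s + 1)),
      Nat.card (↥(subFun p r i) →+ ZMod (p ^ s) ⧸ subFun p s j) =
        p ^ (min i.1 (s - j.1)) := by
    intro i j
    haveI : IsAddCyclic (ZMod (p ^ s) ⧸ subFun p s j) :=
      isAddCyclic_of_surjective (QuotientAddGroup.mk' _) (QuotientAddGroup.mk'_surjective _)
    rw [card_hom_cyclic, card_subFun hp r i]
    have hj : j.1 ≤ s := Nat.lt_succ_iff.mp j.2
    have hq : Nat.card (ZMod (p ^ s) ⧸ subFun p s j) = p ^ (s - j.1) := by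
      have h1 : Nat.card (ZMod (p ^ s)) =
          Nat.card (ZMod (p ^ s) ⧸ subFun p s j) * Nat.card (subFun p s j) :=
        AddSubgroup.card_eq_card_quotient_mul_card_addSubgroup _
      rw [Nat.card_zmod, card_subFun hp s j] at h1
      have h2 : p ^ s = p ^ (s - j.1) * p ^ j.1 := by
        rw [← pow_add, Nat.sub_add_cancel hj]
      exact Nat.eq_of_mul_eq_mul_right (pow_pos hp.pos _) (h1.symm.trans h2)
    rw [hq, gcd_pow_pow, Nat.min_comm]
  -- Step 3: reindex the sums
  have hsum : (Nat.card (AddSubgroup (ZMod (p ^ r) × ZMod (p ^ s))) : ℕ) =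
      ∑ i ∈ Finset.range (r + 1), ∑ j ∈ Finset.range (s + 1), p ^ (min i j) := by
    rw [hcard]
    have e1 : ∑ i : Fin (r + 1), ∑ j : Fin (s + 1), p ^ (min i.1 (s - j.1)) =
        ∑ I : AddSubgroup (ZMod (p ^ r)), ∑ K : AddSubgroup (ZMod (p ^ s)),
          Nat.card (↥I →+ ZMod (p ^ s) ⧸ K) := by
      refine Fintype.sum_bijective (subFun p r) (subFun_bijective hp r) _ _ fun i => ?_
      refine Fintype.sum_bijective (subFun p s) (subFun_bijective hp s) _ _ fun j => ?_
      exact (hterm i j).symm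
    rw [← e1]
    have e2 : ∀ i : Fin (r + 1),
        ∑ j : Fin (s + 1), p ^ (min i.1 (s - j.1)) = ∑ j : Fin (s + 1), p ^ (min i.1 j.1) := by
      intro i
      refine Fintype.sum_bijective Fin.rev Fin.rev_bijective _ _ fun j => ?_
      congr 2
      have hj : j.1 ≤ s := Nat.lt_succ_iff.mp j.2
      have : (Fin.rev j).1 = s + 1 - (j.1 + 1) := Fin.val_rev j
      omega
    rw [Finset.sum_congr rfl fun i _ => e2 i]
    rw [Fin.sum_univ_eq_sum_range (fun i => ∑ j : Fin (s + 1), p ^ (min i j.1))]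
    exact Finset.sum_congr rfl fun i _ =>
      Fin.sum_univ_eq_sum_range (fun j => p ^ (min i j)) (s + 1)
  rw [hsum]
  push_cast
  exact key_arith (p : ℤ) r s hrs
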